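/- arXiv:1510.04232 — 2 statements merged into one kernel-verified Lean document; each statement's English description precedes it below -/
import Mathlib

section
/- Let Z be a real Hilbert space, C a closed subspace, E a subset of Z, and x in E ∩ C. Suppose E_k ⊆ Z, and (x_k, y_k) ∈ C × E_k minimizes |x' - y'| over C × E_k. Assume: (i) dist(z, E_k) <= ρ_k for all z in E; (ii) dist(z, E) <= t_k for all z in E_k; (iii) there is 0 <= λ < 1 with |P_C z - x| <= λ |z - x| for all z in E. Then |x_k - x| <= (t_k + λ(t_k + ρ_k)) / (1 - λ). -/
/-- Convergence estimate for the data-driven problem (Proposition 1). -/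
theorem stmt_3 {Z : Type*} [NormedAddCommGroup Z] [InnerProductSpace ℝ Z]
    [CompleteSpace Z] (C : Submodule ℝ Z) (hCcl : IsClosed (C : Set Z))
    [CompleteSpace C] (E Ek : Set Z) (x : Z) (hxE : x ∈ E) (hxC : x ∈ C)
    (ρ t lam : ℝ) (hρ : 0 ≤ ρ) (ht : 0 ≤ t) (hlam0 : 0 ≤ lam) (hlam1 : lam < 1)
    (xk yk : Z) (hxk : xk ∈ (C : Set Z)) (hyk : yk ∈ Ek)
    (hmin : ∀ x' ∈ (C : Set Z), ∀ y' ∈ Ek, ‖xk - yk‖ ≤ ‖x' - y'‖)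
    (hdense : ∀ z ∈ E, Metric.infDist z Ek ≤ ρ)
    (hnooutlier : ∀ z ∈ Ek, Metric.infDist z E ≤ t)
    (htrans : ∀ z ∈ E, ‖(C.orthogonalProjectionOnto z : Z) - x‖ ≤ lam * ‖z - x‖) :
    ‖xk - x‖ ≤ (t + lam * (t + ρ)) / (1 - lam) := by
  have h1lam : (0:ℝ) < 1 - lam := by linarith
  -- xk is the orthogonal projection of yk onto C
  have hproj : (C.orthogonalProjectionOnto yk : Z) = xk := by
    apply Submodule.eq_starProjection_of_mem_of_inner_eq_zero hxk
    rw [← Submodule.norm_eq_iInf_iff_real_inner_eq_zero C hxk]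
    apply le_antisymm
    · apply le_ciInf
      intro w
      rw [norm_sub_rev]
      rw [show yk - (w:Z) = -((w:Z) - yk) by abel, norm_neg]
      exact hmin w w.2 yk hyk
    · exact ciInf_le ⟨0, by rintro r ⟨w, rfl⟩; positivity⟩ (⟨xk, hxk⟩ : (C : Set Z))
  -- ‖xk - yk‖ ≤ ρ
  have hρk : ‖xk - yk‖ ≤ ρ := by
    apply le_of_forall_pos_le_add
    intro ε hε
    have hlt : Metric.infDist x Ek < ρ + ε := lt_of_le_of_lt (hdense x hxE) (by linarith)
    obtain ⟨y', hy', hd⟩ := (Metric.infDist_lt_iff ⟨yk, hyk⟩).1 hlt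
    calc ‖xk - yk‖ ≤ ‖x - y'‖ := hmin x hxC y' hy'
    _ ≤ ρ + ε := by rw [← dist_eq_norm]; exact hd.le
  -- main estimate with ε
  have key : ∀ ε > 0, (1 - lam) * ‖xk - x‖ ≤ (t + lam * (t + ρ)) + ε := by
    intro ε hε
    have hε2 : (0:ℝ) < ε / 2 := by linarith
    have hlt : Metric.infDist yk E < t + ε / 2 :=
      lt_of_le_of_lt (hnooutlier yk hyk) (by linarith)
    obtain ⟨z, hzE, hd⟩ := (Metric.infDist_lt_iff ⟨x, hxE⟩).1 hlt
    have hdz : ‖yk - z‖ ≤ t + ε / 2 := by rw [← dist_eq_norm]; exact hd.le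
    -- nonexpansiveness
    have hne : ‖xk - (C.orthogonalProjectionOnto z : Z)‖ ≤ ‖yk - z‖ := by
      rw [← hproj]
      have : (C.orthogonalProjectionOnto yk : Z) - (C.orthogonalProjectionOnto z : Z)
          = (C.orthogonalProjectionOnto (yk - z) : Z) := by
        rw [map_sub]; rfl
      rw [this]
      calc ‖(C.orthogonalProjectionOnto (yk - z) : Z)‖
          = ‖C.orthogonalProjectionOnto (yk - z)‖ := rfl
        _ ≤ ‖C.orthogonalProjectionOnto‖ * ‖yk - z‖ :=
            (C.orthogonalProjectionOnto).le_opNorm _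
        _ ≤ 1 * ‖yk - z‖ :=
            mul_le_mul_of_nonneg_right (Submodule.orthogonalProjectionOnto_norm_le C) (norm_nonneg _)
        _ = ‖yk - z‖ := one_mul _
    have hzx : ‖z - x‖ ≤ (t + ε / 2) + ρ + ‖xk - x‖ := by
      calc ‖z - x‖ ≤ ‖z - yk‖ + ‖yk - xk‖ + ‖xk - x‖ := by
            have := norm_sub_le_norm_sub_add_norm_sub z yk x
            have := norm_sub_le_norm_sub_add_norm_sub z xk x
            calc ‖z - x‖ ≤ ‖z - yk‖ + ‖yk - x‖ := norm_sub_le_norm_sub_add_norm_sub _ _ _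
            _ ≤ ‖z - yk‖ + (‖yk - xk‖ + ‖xk - x‖) := by
                linarith [norm_sub_le_norm_sub_add_norm_sub yk xk x]
            _ = ‖z - yk‖ + ‖yk - xk‖ + ‖xk - x‖ := by ring
      _ ≤ (t + ε / 2) + ρ + ‖xk - x‖ := by
            rw [norm_sub_rev z yk, norm_sub_rev yk xk]; linarith
    have hmain : ‖xk - x‖ ≤ ‖yk - z‖ + lam * ‖z - x‖ := by
      calc ‖xk - x‖ ≤ ‖xk - (C.orthogonalProjectionOnto z : Z)‖
            + ‖(C.orthogonalProjectionOnto z : Z) - x‖ :=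
            norm_sub_le_norm_sub_add_norm_sub _ _ _
      _ ≤ ‖yk - z‖ + lam * ‖z - x‖ := add_le_add hne (htrans z hzE)
    have : ‖xk - x‖ ≤ (t + ε / 2) + lam * ((t + ε / 2) + ρ + ‖xk - x‖) := by
      calc ‖xk - x‖ ≤ ‖yk - z‖ + lam * ‖z - x‖ := hmain
      _ ≤ (t + ε / 2) + lam * ((t + ε / 2) + ρ + ‖xk - x‖) := by
          have := mul_le_mul_of_nonneg_left hzx hlam0
          linarith
    nlinarith
  rw [le_div_iff₀ h1lam, mul_comm]
  exact le_of_forall_pos_le_add key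
end

section
/- Under the hypotheses of the data-driven convergence proposition, if additionally ρ_k → 0 and t_k → 0 as k → ∞, then x_k → x in Z. -/
/-- If additionally `ρ_k → 0` and `t_k → 0`, the data-driven solutions converge: `x_k → x`. -/
theorem stmt_4 {Z : Type*} [NormedAddCommGroup Z] [InnerProductSpace ℝ Z]
    [CompleteSpace Z] (C : Submodule ℝ Z) (hCcl : IsClosed (C : Set Z))
    [CompleteSpace C] (E : Set Z) (Ek : ℕ → Set Z) (x : Z) (hxE : x ∈ E) (hxC : x ∈ C)
    (ρ t : ℕ → ℝ) (hρ : ∀ k, 0 ≤ ρ k) (ht : ∀ k, 0 ≤ t k)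
    (lam : ℝ) (hlam0 : 0 ≤ lam) (hlam1 : lam < 1)
    (xk yk : ℕ → Z) (hxk : ∀ k, xk k ∈ (C : Set Z)) (hyk : ∀ k, yk k ∈ Ek k)
    (hmin : ∀ k, ∀ x' ∈ (C : Set Z), ∀ y' ∈ Ek k, ‖xk k - yk k‖ ≤ ‖x' - y'‖)
    (hdense : ∀ k, ∀ z ∈ E, Metric.infDist z (Ek k) ≤ ρ k)
    (hnooutlier : ∀ k, ∀ z ∈ Ek k, Metric.infDist z E ≤ t k)
    (htrans : ∀ z ∈ E, ‖(C.orthogonalProjectionOnto z : Z) - x‖ ≤ lam * ‖z - x‖)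
    (hρ0 : Filter.Tendsto ρ Filter.atTop (nhds 0))
    (ht0 : Filter.Tendsto t Filter.atTop (nhds 0)) :
    Filter.Tendsto xk Filter.atTop (nhds x) := by
  have hEk_ne : ∀ k, (Ek k).Nonempty := fun k => ⟨yk k, hyk k⟩
  have hE_ne : E.Nonempty := ⟨x, hxE⟩
  have h1lam : (0:ℝ) < 1 - lam := by linarith
  have h1lam' : (0:ℝ) < 1 + lam := by linarith
  set M : ℝ := (1 + lam) / (1 - lam) with hM
  have hMpos : 0 < M := div_pos h1lam' h1lam
  -- Step 1: ‖xk k - yk k‖ ≤ ρ k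
  have hgap : ∀ k, ‖xk k - yk k‖ ≤ ρ k := by
    intro k
    refine le_of_forall_pos_le_add ?_
    intro ε hε
    have h : Metric.infDist x (Ek k) < ρ k + ε := lt_of_le_of_lt (hdense k x hxE) (by linarith)
    obtain ⟨y', hy', hdy⟩ := (Metric.infDist_lt_iff (hEk_ne k)).mp h
    calc ‖xk k - yk k‖ ≤ ‖x - y'‖ := hmin k x hxC y' hy'
      _ = dist x y' := (dist_eq_norm x y').symm
      _ ≤ ρ k + ε := le_of_lt hdy
  -- Step 2: key bound
  have hbound : ∀ k, ‖xk k - x‖ ≤ M * (ρ k + t k) := by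
    intro k
    refine le_of_forall_pos_le_add ?_
    intro δ hδ
    set ε : ℝ := δ * (1 - lam) / (1 + lam) with hε
    have hεpos : 0 < ε := by positivity
    have h : Metric.infDist (yk k) E < t k + ε :=
      lt_of_le_of_lt (hnooutlier k (yk k) (hyk k)) (by linarith)
    obtain ⟨z, hzE, hdz⟩ := (Metric.infDist_lt_iff hE_ne).mp h
    have hyz : ‖yk k - z‖ ≤ t k + ε := le_of_lt (by rwa [dist_eq_norm] at hdz)
    -- projection bound
    have hPxk : ((C.orthogonalProjectionOnto (xk k) : Z)) = xk k :=
      Submodule.starProjection_eq_self_iff.mpr (hxk k)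
    have hproj : ‖xk k - (C.orthogonalProjectionOnto z : Z)‖ ≤ ‖xk k - z‖ := by
      have h1 : xk k - (C.orthogonalProjectionOnto z : Z)
          = ((C.orthogonalProjectionOnto (xk k - z) : C) : Z) := by
        rw [map_sub]
        push_cast
        rw [hPxk]
      rw [h1]
      calc ‖((C.orthogonalProjectionOnto (xk k - z) : C) : Z)‖
          = ‖C.orthogonalProjectionOnto (xk k - z)‖ := rfl
        _ ≤ ‖C.orthogonalProjectionOnto (E := Z)‖ * ‖xk k - z‖ :=
            (C.orthogonalProjectionOnto).le_opNorm _
        _ ≤ 1 * ‖xk k - z‖ := by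
            exact mul_le_mul_of_nonneg_right (Submodule.orthogonalProjectionOnto_norm_le C) (norm_nonneg _)
        _ = ‖xk k - z‖ := one_mul _
    have htr : ‖(C.orthogonalProjectionOnto z : Z) - x‖ ≤ lam * ‖z - x‖ := htrans z hzE
    have hzx : ‖z - x‖ ≤ (t k + ε) + ρ k + ‖xk k - x‖ := by
      calc ‖z - x‖ ≤ ‖z - yk k‖ + ‖yk k - xk k‖ + ‖xk k - x‖ := by
            have := norm_sub_le_norm_sub_add_norm_sub z (yk k) x
            have := norm_sub_le_norm_sub_add_norm_sub (yk k) (xk k) x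
            calc ‖z - x‖ ≤ ‖z - yk k‖ + ‖yk k - x‖ := norm_sub_le_norm_sub_add_norm_sub _ _ _
              _ ≤ ‖z - yk k‖ + (‖yk k - xk k‖ + ‖xk k - x‖) := by linarith
              _ = _ := by ring
        _ ≤ (t k + ε) + ρ k + ‖xk k - x‖ := by
            have h1 : ‖z - yk k‖ = ‖yk k - z‖ := norm_sub_rev _ _
            have h2 : ‖yk k - xk k‖ = ‖xk k - yk k‖ := norm_sub_rev _ _
            have := hgap k
            linarith [hyz]
    have hxkz : ‖xk k - z‖ ≤ ρ k + (t k + ε) := by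
      calc ‖xk k - z‖ ≤ ‖xk k - yk k‖ + ‖yk k - z‖ := norm_sub_le_norm_sub_add_norm_sub _ _ _
        _ ≤ ρ k + (t k + ε) := add_le_add (hgap k) hyz
    have hmain : ‖xk k - x‖ ≤ (ρ k + (t k + ε)) + lam * ((t k + ε) + ρ k + ‖xk k - x‖) := by
      calc ‖xk k - x‖ ≤ ‖xk k - (C.orthogonalProjectionOnto z : Z)‖
            + ‖(C.orthogonalProjectionOnto z : Z) - x‖ := norm_sub_le_norm_sub_add_norm_sub _ _ _
        _ ≤ (ρ k + (t k + ε)) + lam * ((t k + ε) + ρ k + ‖xk k - x‖) := by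
            have h3 : lam * ‖z - x‖ ≤ lam * ((t k + ε) + ρ k + ‖xk k - x‖) :=
              mul_le_mul_of_nonneg_left hzx hlam0
            linarith [le_trans hproj hxkz, le_trans htr h3]
    have hkey : (1 - lam) * ‖xk k - x‖ ≤ (1 + lam) * (ρ k + t k + ε) := by nlinarith
    have : ‖xk k - x‖ ≤ M * (ρ k + t k + ε) := by
      rw [hM, div_mul_eq_mul_div, le_div_iff₀ h1lam]
      linarith [hkey]
    calc ‖xk k - x‖ ≤ M * (ρ k + t k + ε) := this
      _ = M * (ρ k + t k) + M * ε := by ring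
      _ = M * (ρ k + t k) + δ := by
          rw [hε, hM]
          field_simp
  -- Step 3: squeeze
  rw [tendsto_iff_norm_sub_tendsto_zero]
  have hlim : Filter.Tendsto (fun k => M * (ρ k + t k)) Filter.atTop (nhds 0) := by
    have := (hρ0.add ht0).const_mul M
    simpa using this
  exact squeeze_zero (fun k => norm_nonneg _) hbound hlim
end
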